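/- Let h ∈ L²(Ω). If u is a weak subsolution of L_K u + V u = h in Ω, v is a weak supersolution of L_K v + V v = h in Ω, and u ≤ v a.e. on ℝⁿ \ Ω, then u ≤ v a.e. on ℝⁿ (comparison principle). -/

import Mathlib

open MeasureTheory Real Filter
open scoped ENNReal RealInnerProductSpace


private lemma aux_sq_max (a b : ℝ) : (max a 0 - max b 0)^2 ≤ (a-b)^2 := by
  have h := abs_max_sub_max_le_abs a b 0
  calc (max a 0 - max b 0)^2 = |max a 0 - max b 0|^2 := (sq_abs _).symm
    _ ≤ |a-b|^2 := by exact pow_le_pow_left₀ (abs_nonneg _) h 2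
    _ = (a-b)^2 := sq_abs _

private lemma aux_key (a b : ℝ) : (max a 0 - max b 0)^2 ≤ (a - b) * (max a 0 - max b 0) := by
  rcases le_total a 0 with ha|ha <;> rcases le_total b 0 with hb|hb <;>
    simp [max_eq_right, max_eq_left, ha, hb] <;> nlinarith

private lemma aux_mul_max (a : ℝ) : a * max a 0 = (max a 0)^2 := by
  rcases le_total a 0 with ha|ha <;> simp [max_eq_right, max_eq_left, ha] <;> ring

private lemma aux_abs_mul (a b Kv : ℝ) (hK : 0 ≤ Kv) : |a * b * Kv| ≤ a^2*Kv + b^2*Kv := by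
  rw [abs_mul, abs_of_nonneg hK, abs_mul]
  nlinarith [sq_nonneg (|a| - |b|), sq_abs a, sq_abs b, abs_nonneg a, abs_nonneg b]

private lemma aux_lint_two {α} [MeasurableSpace α] {μ : Measure α} {f g₁ g₂ : α → ℝ≥0∞}
    (h₁ : Measurable g₁) (h₂ : Measurable g₂)
    (hle : ∀ᵐ x ∂μ, f x ≤ 2 * g₁ x + 2 * g₂ x) :
    ∫⁻ x, f x ∂μ ≤ 2 * (∫⁻ x, g₁ x ∂μ) + 2 * ∫⁻ x, g₂ x ∂μ := by
  refine (lintegral_mono_ae hle).trans ?_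
  rw [lintegral_add_left (h₁.const_mul 2), lintegral_const_mul 2 h₁, lintegral_const_mul 2 h₂]

private lemma aux_ofReal_two {x u v Kv : ℝ} (hK : 0 ≤ Kv) (hx : x^2 ≤ 2*u^2 + 2*v^2) :
    ENNReal.ofReal (x^2 * Kv) ≤ 2 * ENNReal.ofReal (u^2 * Kv) + 2 * ENNReal.ofReal (v^2 * Kv) := by
  calc ENNReal.ofReal (x^2*Kv) ≤ ENNReal.ofReal (2*(u^2*Kv) + 2*(v^2*Kv)) := by
        apply ENNReal.ofReal_le_ofReal; nlinarith
    _ ≤ ENNReal.ofReal (2*(u^2*Kv)) + ENNReal.ofReal (2*(v^2*Kv)) := ENNReal.ofReal_add_le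
    _ = 2 * ENNReal.ofReal (u^2*Kv) + 2 * ENNReal.ofReal (v^2*Kv) := by
        rw [ENNReal.ofReal_mul (le_of_lt two_pos), ENNReal.ofReal_mul (le_of_lt two_pos)]
        simp [ENNReal.ofReal_ofNat]

noncomputable section

/-- Euclidean space ℝⁿ. -/
abbrev En (n : ℕ) := EuclideanSpace ℝ (Fin n)

/-- The squared Gagliardo seminorm `[u]_s²`. -/
def gagliardoSq (n : ℕ) (s : ℝ) (u : En n → ℝ) : ℝ≥0∞ :=
  ∫⁻ p : En n × En n,
    ENNReal.ofReal ((u p.1 - u p.2) ^ 2 * ‖p.1 - p.2‖ ^ (-((n : ℝ) + 2 * s)))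

/-- `K` is a symmetric measurable kernel comparable to `c⬝|y|^{-(n+2s)}`
with ellipticity constants `lam ≤ Lam`. -/
def IsKernel (n : ℕ) (s lam Lam c : ℝ) (K : En n → ℝ) : Prop :=
  Measurable K ∧ (∀ y : En n, K (-y) = K y) ∧
    ∀ y : En n, y ≠ 0 →
      lam * c * ‖y‖ ^ (-((n : ℝ) + 2 * s)) ≤ K y ∧
        K y ≤ Lam * c * ‖y‖ ^ (-((n : ℝ) + 2 * s))

/-- The nonlocal operator `L_K` applied to a test function. -/
def LK (n : ℕ) (K φ : En n → ℝ) (x : En n) : ℝ :=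
  (1 / 2) * ∫ y : En n, (2 * φ x - φ (x + y) - φ (x - y)) * K y

/-- `V ∈ L^q_loc(ℝⁿ)`. -/
def LocLq (n : ℕ) (q : ℝ) (V : En n → ℝ) : Prop :=
  ∀ A : Set (En n), IsCompact A → MemLp V (ENNReal.ofReal q) (volume.restrict A)

/-- The space `X^s_0(Ω)`: measurable functions vanishing a.e. outside `Ω`
with finite Gagliardo seminorm. -/
def Xs0 (n : ℕ) (s : ℝ) (Ω : Set (En n)) : Set (En n → ℝ) :=
  {u | Measurable u ∧ (∀ᵐ x : En n ∂volume, x ∉ Ω → u x = 0) ∧ gagliardoSq n s u < ⊤}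

/-- `∫_Ω V u²`. -/
def VIntSq (n : ℕ) (V : En n → ℝ) (Ω : Set (En n)) (u : En n → ℝ) : ℝ≥0∞ :=
  ∫⁻ x in Ω, ENNReal.ofReal (V x * u x ^ 2)

/-- The space `Y^s_0(Ω) = X^s_0(Ω) ∩ L²_V(Ω)`. -/
def Ys0 (n : ℕ) (s : ℝ) (Ω : Set (En n)) (V : En n → ℝ) : Set (En n → ℝ) :=
  {u | u ∈ Xs0 n s Ω ∧ VIntSq n V Ω u < ⊤}

/-- The squared `Y^s_0(Ω)` norm: `[u]_s² + ∫_Ω V u²`. -/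
def YnormSq (n : ℕ) (s : ℝ) (Ω : Set (En n)) (V : En n → ℝ) (u : En n → ℝ) : ℝ≥0∞ :=
  gagliardoSq n s u + VIntSq n V Ω u

/-- The kernel quadratic form `∬ (u(x)-u(y))² K(x-y) dx dy` (as an `ℝ≥0∞`-integral). -/
def kerSq (n : ℕ) (K : En n → ℝ) (u : En n → ℝ) : ℝ≥0∞ :=
  ∫⁻ p : En n × En n, ENNReal.ofReal ((u p.1 - u p.2) ^ 2 * K (p.1 - p.2))

/-- The bilinear form `(1/2)∬ (u(x)-u(y))(φ(x)-φ(y)) K(x-y) dx dy`. -/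
def bilin (n : ℕ) (K : En n → ℝ) (u φ : En n → ℝ) : ℝ :=
  (1 / 2) * ∫ p : En n × En n, (u p.1 - u p.2) * (φ p.1 - φ p.2) * K (p.1 - p.2)

/-- The energy functional `E_V`. -/
def energy (n : ℕ) (K V f : En n → ℝ) (Ω : Set (En n)) (v : En n → ℝ) : ℝ :=
  (1 / 2) * (kerSq n K v).toReal + (VIntSq n V Ω v).toReal - 2 * ∫ x in Ω, f x * v x

/-- The region `ℝ^{2n}_Ω = (ℝⁿ×ℝⁿ) \ (Ωᶜ×Ωᶜ)`. -/
def R2n (n : ℕ) (Ω : Set (En n)) : Set (En n × En n) := (Ωᶜ ×ˢ Ωᶜ)ᶜ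

/-- The squared Gagliardo seminorm restricted to `ℝ^{2n}_Ω`. -/
def gagliardoSqOn (n : ℕ) (s : ℝ) (Ω : Set (En n)) (u : En n → ℝ) : ℝ≥0∞ :=
  ∫⁻ p in R2n n Ω,
    ENNReal.ofReal ((u p.1 - u p.2) ^ 2 * ‖p.1 - p.2‖ ^ (-((n : ℝ) + 2 * s)))

/-- The kernel quadratic form restricted to `ℝ^{2n}_Ω`. -/
def kerSqOn (n : ℕ) (Ω : Set (En n)) (K : En n → ℝ) (u : En n → ℝ) : ℝ≥0∞ :=
  ∫⁻ p in R2n n Ω, ENNReal.ofReal ((u p.1 - u p.2) ^ 2 * K (p.1 - p.2))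

/-- The bilinear form restricted to `ℝ^{2n}_Ω`. -/
def bilinOn (n : ℕ) (Ω : Set (En n)) (K : En n → ℝ) (u φ : En n → ℝ) : ℝ :=
  (1 / 2) * ∫ p in R2n n Ω, (u p.1 - u p.2) * (φ p.1 - φ p.2) * K (p.1 - p.2)

/-- The energy functional `E_V` with the double integral over `ℝ^{2n}_Ω`. -/
def energyOn (n : ℕ) (Ω : Set (En n)) (K V f : En n → ℝ) (v : En n → ℝ) : ℝ :=
  (1 / 2) * (kerSqOn n Ω K v).toReal + (VIntSq n V Ω v).toReal - 2 * ∫ x in Ω, f x * v x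

set_option maxHeartbeats 1000000 in
/-- comparison principle: if `u` is a weak subsolution and `v`
a weak supersolution of `L_K w + V w = h` in `Ω` with `u ≤ v` a.e. outside `Ω`,
then `u ≤ v` a.e. on `ℝⁿ`. -/
theorem stmt10 (n : ℕ) (hn : 2 ≤ n) (s : ℝ) (hs0 : 0 < s) (hs1 : s < 1)
    (c lam Lam : ℝ) (hlam : 0 < lam) (hlamLam : lam ≤ Lam) (hc : 0 < c)
    (hc1 : c * ∫ ξ : En n, (1 - Real.cos (ξ ⟨0, by omega⟩)) * ‖ξ‖ ^ (-((n : ℝ) + 2 * s)) = 1)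
    (K : En n → ℝ) (hK : IsKernel n s lam Lam c K)
    (q : ℝ) (hq : (n : ℝ) / (2 * s) < q)
    (V : En n → ℝ) (hVmeas : Measurable V) (hV0 : ∀ x, 0 ≤ V x) (hVq : LocLq n q V)
    (Ω : Set (En n)) (hΩo : IsOpen Ω) (hΩb : Bornology.IsBounded Ω)
    (h : En n → ℝ) (hh : MemLp h 2 (volume.restrict Ω))
    (u : En n → ℝ) (hu_meas : Measurable u)
    (hu_g : gagliardoSqOn n s Ω u < ⊤)
    (hu_L2 : MemLp u 2 (volume.restrict Ω))
    (hu_V : VIntSq n V Ω u < ⊤)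
    (v : En n → ℝ) (hv_meas : Measurable v)
    (hv_g : gagliardoSqOn n s Ω v < ⊤)
    (hv_L2 : MemLp v 2 (volume.restrict Ω))
    (hv_V : VIntSq n V Ω v < ⊤)
    (hsub : ∀ φ ∈ Ys0 n s Ω V, (∀ x, 0 ≤ φ x) →
      bilinOn n Ω K u φ + ∫ x in Ω, V x * u x * φ x ≤ ∫ x in Ω, h x * φ x)
    (hsuper : ∀ φ ∈ Ys0 n s Ω V, (∀ x, 0 ≤ φ x) →
      ∫ x in Ω, h x * φ x ≤ bilinOn n Ω K v φ + ∫ x in Ω, V x * v x * φ x)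
    (hbd : ∀ᵐ x : En n ∂volume, x ∉ Ω → u x ≤ v x) :
    ∀ᵐ x : En n ∂volume, u x ≤ v x := by
  classical
  haveI : Nontrivial (En n) := by
    refine ⟨EuclideanSpace.single (⟨0, by omega⟩ : Fin n) (1 : ℝ), 0, ?_⟩
    intro hcon
    have := congrArg (fun f : En n => f (⟨0, by omega⟩ : Fin n)) hcon
    simp [EuclideanSpace.single_apply] at this
  obtain ⟨hKmeas, hKsymm, hKbd⟩ := hK
  set a : En n → ℝ := fun x => u x - v x with ha
  set w : En n → ℝ := fun x => max (a x) 0 with hwdef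
  have hw_meas : Measurable w := (hu_meas.sub hv_meas).max measurable_const
  have hw_nonneg : ∀ x, 0 ≤ w x := fun x => le_max_right _ _
  have hΩm : MeasurableSet Ω := hΩo.measurableSet
  have hKm2 : Measurable fun p : En n × En n => K (p.1 - p.2) :=
    hKmeas.comp (measurable_fst.sub measurable_snd)
  -- measurability of the gagliardo weight
  have hrm : Measurable fun p : En n × En n => ‖p.1 - p.2‖ ^ (-((n : ℝ) + 2 * s)) := by
    have h1 : Continuous fun p : En n × En n => ‖p.1 - p.2‖ ^ ((n : ℝ) + 2 * s) :=
      (Real.continuous_rpow_const (by have : (0:ℝ) ≤ n := Nat.cast_nonneg n; linarith)).comp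
        (continuous_fst.sub continuous_snd).norm
    have h2 : (fun p : En n × En n => ‖p.1 - p.2‖ ^ (-((n : ℝ) + 2 * s)))
        = fun p => (‖p.1 - p.2‖ ^ ((n : ℝ) + 2 * s))⁻¹ := by
      funext p; rw [Real.rpow_neg (norm_nonneg _)]
    rw [h2]; exact h1.measurable.inv
  -- the diagonal is null
  have hdiag : (volume : Measure (En n × En n)) {p | p.1 = p.2} = 0 := by
    rw [Measure.volume_eq_prod]
    have hd : MeasurableSet {p : En n × En n | p.1 = p.2} :=
      measurableSet_eq_fun measurable_fst measurable_snd
    rw [Measure.prod_apply hd]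
    have he : ∀ x : En n, (volume ((fun y => (x, y) : En n → En n × En n) ⁻¹' {p : En n × En n | p.1 = p.2})) = 0 := by
      intro x
      have : ((fun y => (x, y) : En n → En n × En n) ⁻¹' {p : En n × En n | p.1 = p.2}) = {x} := by
        ext y; simp [eq_comm]
      rw [this]; exact measure_singleton x
    simp [he]
  have hne : ∀ᵐ p : En n × En n ∂volume, p.1 ≠ p.2 := by
    rw [ae_iff]
    convert hdiag using 2
    ext p; simp
  have hKpos : ∀ᵐ p : En n × En n ∂volume, 0 < K (p.1 - p.2) := by
    filter_upwards [hne] with p hp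
    have h0 : p.1 - p.2 ≠ 0 := sub_ne_zero.mpr hp
    have h1 := (hKbd _ h0).1
    have hr : 0 < ‖p.1 - p.2‖ ^ (-((n : ℝ) + 2 * s)) :=
      Real.rpow_pos_of_pos (norm_pos_iff.mpr h0) _
    nlinarith [mul_pos (mul_pos hlam hc) hr]
  have hKub : ∀ᵐ p : En n × En n ∂volume,
      K (p.1 - p.2) ≤ Lam * c * ‖p.1 - p.2‖ ^ (-((n : ℝ) + 2 * s)) := by
    filter_upwards [hne] with p hp
    exact (hKbd _ (sub_ne_zero.mpr hp)).2
  have hLamc : 0 ≤ Lam * c := le_of_lt (mul_pos (lt_of_lt_of_le hlam hlamLam) hc)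
  -- kernel quadratic form bounded by gagliardo seminorm
  have hker_le : ∀ g : En n → ℝ,
      kerSqOn n Ω K g ≤ ENNReal.ofReal (Lam * c) * gagliardoSqOn n s Ω g := by
    intro g
    simp only [kerSqOn, gagliardoSqOn]
    refine le_trans (lintegral_mono_ae ?_)
      (le_of_eq (lintegral_const_mul' _ _ ENNReal.ofReal_ne_top))
    filter_upwards [ae_restrict_of_ae hKub] with p hp
    calc ENNReal.ofReal ((g p.1 - g p.2) ^ 2 * K (p.1 - p.2))
        ≤ ENNReal.ofReal ((Lam * c) * ((g p.1 - g p.2) ^ 2 * ‖p.1 - p.2‖ ^ (-((n : ℝ) + 2 * s)))) := by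
          apply ENNReal.ofReal_le_ofReal
          nlinarith [sq_nonneg (g p.1 - g p.2)]
      _ = ENNReal.ofReal (Lam * c) *
            ENNReal.ofReal ((g p.1 - g p.2) ^ 2 * ‖p.1 - p.2‖ ^ (-((n : ℝ) + 2 * s))) :=
          ENNReal.ofReal_mul hLamc
  have hfeM : ∀ g : En n → ℝ, Measurable g →
      Measurable fun p : En n × En n =>
        ENNReal.ofReal ((g p.1 - g p.2) ^ 2 * K (p.1 - p.2)) := by
    intro g hg
    exact ENNReal.measurable_ofReal.comp
      ((((hg.comp measurable_fst).sub (hg.comp measurable_snd)).pow_const 2).mul hKm2)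
  have hgeM : ∀ g : En n → ℝ, Measurable g →
      Measurable fun p : En n × En n =>
        ENNReal.ofReal ((g p.1 - g p.2) ^ 2 * ‖p.1 - p.2‖ ^ (-((n : ℝ) + 2 * s))) := by
    intro g hg
    exact ENNReal.measurable_ofReal.comp
      ((((hg.comp measurable_fst).sub (hg.comp measurable_snd)).pow_const 2).mul hrm)
  have hkerU : kerSqOn n Ω K u < ⊤ :=
    lt_of_le_of_lt (hker_le u) (ENNReal.mul_lt_top ENNReal.ofReal_lt_top hu_g)
  have hkerV : kerSqOn n Ω K v < ⊤ :=
    lt_of_le_of_lt (hker_le v) (ENNReal.mul_lt_top ENNReal.ofReal_lt_top hv_g)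
  -- pointwise control of w-differences
  have hsqw : ∀ p : En n × En n,
      (w p.1 - w p.2) ^ 2 ≤ 2 * (u p.1 - u p.2) ^ 2 + 2 * (v p.1 - v p.2) ^ 2 := by
    intro p
    have h1 := aux_sq_max (a p.1) (a p.2)
    simp only [ha] at h1
    simp only [hwdef, ha]
    nlinarith [sq_nonneg ((u p.1 - u p.2) + (v p.1 - v p.2))]
  have hkerW : kerSqOn n Ω K w < ⊤ := by
    have hb : kerSqOn n Ω K w ≤ 2 * kerSqOn n Ω K u + 2 * kerSqOn n Ω K v := by
      simp only [kerSqOn]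
      refine aux_lint_two (hfeM u hu_meas) (hfeM v hv_meas) ?_
      filter_upwards [ae_restrict_of_ae hKpos] with p hp
      exact aux_ofReal_two hp.le (hsqw p)
    refine lt_of_le_of_lt hb (ENNReal.add_lt_top.mpr
      ⟨ENNReal.mul_lt_top (by norm_num) hkerU, ENNReal.mul_lt_top (by norm_num) hkerV⟩)
  have hgW : gagliardoSqOn n s Ω w < ⊤ := by
    have hb : gagliardoSqOn n s Ω w ≤ 2 * gagliardoSqOn n s Ω u + 2 * gagliardoSqOn n s Ω v := by
      simp only [gagliardoSqOn]
      refine aux_lint_two (hgeM u hu_meas) (hgeM v hv_meas) ?_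
      refine Eventually.of_forall fun p => ?_
      exact aux_ofReal_two (Real.rpow_nonneg (norm_nonneg _) _) (hsqw p)
    refine lt_of_le_of_lt hb (ENNReal.add_lt_top.mpr
      ⟨ENNReal.mul_lt_top (by norm_num) hu_g, ENNReal.mul_lt_top (by norm_num) hv_g⟩)
  have hsqw1 : ∀ x, (w x) ^ 2 ≤ 2 * (u x) ^ 2 + 2 * (v x) ^ 2 := by
    intro x
    have h1 := aux_sq_max (a x) 0
    simp only [ha, max_self, sub_zero] at h1
    simp only [hwdef, ha]
    nlinarith [sq_nonneg (u x + v x)]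
  have hVW : VIntSq n V Ω w < ⊤ := by
    have hb : VIntSq n V Ω w ≤ 2 * VIntSq n V Ω u + 2 * VIntSq n V Ω v := by
      simp only [VIntSq]
      refine aux_lint_two
        (ENNReal.measurable_ofReal.comp (hVmeas.mul (hu_meas.pow_const 2)))
        (ENNReal.measurable_ofReal.comp (hVmeas.mul (hv_meas.pow_const 2))) ?_
      refine Eventually.of_forall fun x => ?_
      rw [mul_comm (V x) (w x ^ 2), mul_comm (V x) (u x ^ 2), mul_comm (V x) (v x ^ 2)]
      exact aux_ofReal_two (hV0 x) (hsqw1 x)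
    refine lt_of_le_of_lt hb (ENNReal.add_lt_top.mpr
      ⟨ENNReal.mul_lt_top (by norm_num) hu_V, ENNReal.mul_lt_top (by norm_num) hv_V⟩)
  -- w vanishes outside Ω
  have hw0 : ∀ᵐ x : En n ∂volume, x ∉ Ω → w x = 0 := by
    filter_upwards [hbd] with x hx hxo
    simp only [hwdef, ha]
    exact max_eq_right (sub_nonpos.mpr (hx hxo))
  have hout : ∀ᵐ x ∂(volume : Measure (En n)).restrict Ωᶜ, w x = 0 :=
    (ae_restrict_iff' hΩm.compl).mpr hw0
  -- the full gagliardo seminorm of w is finite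
  have hgfull : gagliardoSq n s w < ⊤ := by
    have hprod : (volume : Measure (En n × En n)).restrict (Ωᶜ ×ˢ Ωᶜ) =
        (volume.restrict Ωᶜ).prod (volume.restrict Ωᶜ) := by
      rw [Measure.volume_eq_prod, Measure.prod_restrict]
    have hS0 : (∫⁻ p in (Ωᶜ ×ˢ Ωᶜ : Set (En n × En n)),
        ENNReal.ofReal ((w p.1 - w p.2) ^ 2 * ‖p.1 - p.2‖ ^ (-((n : ℝ) + 2 * s)))) = 0 := by
      rw [show (∫⁻ p in (Ωᶜ ×ˢ Ωᶜ : Set (En n × En n)),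
          ENNReal.ofReal ((w p.1 - w p.2) ^ 2 * ‖p.1 - p.2‖ ^ (-((n : ℝ) + 2 * s))))
          = ∫⁻ p, ENNReal.ofReal ((w p.1 - w p.2) ^ 2 * ‖p.1 - p.2‖ ^ (-((n : ℝ) + 2 * s)))
              ∂((volume.restrict Ωᶜ).prod (volume.restrict Ωᶜ)) from by rw [← hprod]]
      have h1 : ∀ᵐ p ∂((volume.restrict Ωᶜ).prod ((volume : Measure (En n)).restrict Ωᶜ)),
          w p.1 = 0 := Measure.quasiMeasurePreserving_fst.ae hout
      have h2 : ∀ᵐ p ∂((volume.restrict Ωᶜ).prod ((volume : Measure (En n)).restrict Ωᶜ)),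
          w p.2 = 0 := Measure.quasiMeasurePreserving_snd.ae hout
      rw [show (0 : ℝ≥0∞) = ∫⁻ _p : En n × En n,
          (0 : ℝ≥0∞) ∂((volume.restrict Ωᶜ).prod (volume.restrict Ωᶜ)) from (lintegral_zero).symm]
      apply lintegral_congr_ae
      filter_upwards [h1, h2] with p e1 e2
      simp [e1, e2]
    have hsplit := lintegral_add_compl
      (fun p : En n × En n =>
        ENNReal.ofReal ((w p.1 - w p.2) ^ 2 * ‖p.1 - p.2‖ ^ (-((n : ℝ) + 2 * s))))
      (μ := (volume : Measure (En n × En n))) (hΩm.compl.prod hΩm.compl)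
    have : gagliardoSq n s w = gagliardoSqOn n s Ω w := by
      simp only [gagliardoSq, gagliardoSqOn, R2n]
      rw [← hsplit, hS0, zero_add]
    rw [this]; exact hgW
  have hwY : w ∈ Ys0 n s Ω V := ⟨⟨hw_meas, hw0, hgfull⟩, hVW⟩
  -- integrability of the bilinear integrands
  have hIntKer : ∀ g : En n → ℝ, Measurable g → kerSqOn n Ω K g < ⊤ →
      Integrable (fun p : En n × En n => (g p.1 - g p.2) * (w p.1 - w p.2) * K (p.1 - p.2))
        ((volume : Measure (En n × En n)).restrict (R2n n Ω)) := by
    intro g hg hfin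
    constructor
    · exact ((((hg.comp measurable_fst).sub (hg.comp measurable_snd)).mul
        ((hw_meas.comp measurable_fst).sub (hw_meas.comp measurable_snd))).mul
          hKm2).aestronglyMeasurable
    · rw [hasFiniteIntegral_iff_norm]
      have hb : ∫⁻ p in R2n n Ω,
          ENNReal.ofReal ‖(g p.1 - g p.2) * (w p.1 - w p.2) * K (p.1 - p.2)‖
          ≤ ∫⁻ p in R2n n Ω,
            (ENNReal.ofReal ((g p.1 - g p.2) ^ 2 * K (p.1 - p.2)) +
              ENNReal.ofReal ((w p.1 - w p.2) ^ 2 * K (p.1 - p.2))) := by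
        refine lintegral_mono_ae ?_
        filter_upwards [ae_restrict_of_ae hKpos] with p hp
        have hab := aux_abs_mul (g p.1 - g p.2) (w p.1 - w p.2) (K (p.1 - p.2)) hp.le
        calc ENNReal.ofReal ‖(g p.1 - g p.2) * (w p.1 - w p.2) * K (p.1 - p.2)‖
            = ENNReal.ofReal |(g p.1 - g p.2) * (w p.1 - w p.2) * K (p.1 - p.2)| := by
              rw [Real.norm_eq_abs]
          _ ≤ ENNReal.ofReal ((g p.1 - g p.2) ^ 2 * K (p.1 - p.2) +
                (w p.1 - w p.2) ^ 2 * K (p.1 - p.2)) := ENNReal.ofReal_le_ofReal hab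
          _ ≤ _ := ENNReal.ofReal_add_le
      rw [lintegral_add_left (hfeM g hg)] at hb
      exact lt_of_le_of_lt hb (ENNReal.add_lt_top.mpr ⟨hfin, hkerW⟩)
  have hIntFu := hIntKer u hu_meas hkerU
  have hIntFv := hIntKer v hv_meas hkerV
  -- integrability of V-integrands
  have hIntV : ∀ g : En n → ℝ, Measurable g → VIntSq n V Ω g < ⊤ →
      Integrable (fun x => V x * g x * w x) ((volume : Measure (En n)).restrict Ω) := by
    intro g hg hfin
    constructor
    · exact ((hVmeas.mul hg).mul hw_meas).aestronglyMeasurable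
    · rw [hasFiniteIntegral_iff_norm]
      have hb : ∫⁻ x in Ω, ENNReal.ofReal ‖V x * g x * w x‖
          ≤ ∫⁻ x in Ω, (ENNReal.ofReal (V x * g x ^ 2) + ENNReal.ofReal (V x * w x ^ 2)) := by
        refine lintegral_mono fun x => ?_
        have hab := aux_abs_mul (g x) (w x) (V x) (hV0 x)
        calc ENNReal.ofReal ‖V x * g x * w x‖
            = ENNReal.ofReal |g x * w x * V x| := by rw [Real.norm_eq_abs]; ring_nf
          _ ≤ ENNReal.ofReal (g x ^ 2 * V x + w x ^ 2 * V x) := ENNReal.ofReal_le_ofReal hab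
          _ = ENNReal.ofReal (V x * g x ^ 2 + V x * w x ^ 2) := by ring_nf
          _ ≤ _ := ENNReal.ofReal_add_le
      have hmV : Measurable fun x : En n => ENNReal.ofReal (V x * g x ^ 2) :=
        (hVmeas.mul (hg.pow_const 2)).ennreal_ofReal
      rw [lintegral_add_left hmV] at hb
      exact lt_of_le_of_lt hb (ENNReal.add_lt_top.mpr ⟨hfin, hVW⟩)
  have hIntVu := hIntV u hu_meas hu_V
  have hIntVv := hIntV v hv_meas hv_V
  -- integrability of H and G
  have hIntH : Integrable (fun p : En n × En n => (w p.1 - w p.2) ^ 2 * K (p.1 - p.2))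
      ((volume : Measure (En n × En n)).restrict (R2n n Ω)) := by
    constructor
    · exact ((((hw_meas.comp measurable_fst).sub (hw_meas.comp measurable_snd)).pow_const 2).mul
        hKm2).aestronglyMeasurable
    · rw [hasFiniteIntegral_iff_norm]
      have hb : ∫⁻ p in R2n n Ω, ENNReal.ofReal ‖(w p.1 - w p.2) ^ 2 * K (p.1 - p.2)‖
          = ∫⁻ p in R2n n Ω, ENNReal.ofReal ((w p.1 - w p.2) ^ 2 * K (p.1 - p.2)) := by
        apply lintegral_congr_ae
        filter_upwards [ae_restrict_of_ae hKpos] with p hp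
        rw [Real.norm_eq_abs, abs_of_nonneg (mul_nonneg (sq_nonneg _) hp.le)]
      rw [hb]; exact hkerW
  have hIntG : Integrable (fun p : En n × En n =>
      (a p.1 - a p.2) * (w p.1 - w p.2) * K (p.1 - p.2))
      ((volume : Measure (En n × En n)).restrict (R2n n Ω)) := by
    refine (hIntFu.sub hIntFv).congr (Eventually.of_forall fun p => ?_)
    simp only [ha, Pi.sub_apply]; ring
  -- apply sub/super-solution inequalities
  have hineq := (hsub w hwY hw_nonneg).trans (hsuper w hwY hw_nonneg)
  simp only [bilinOn] at hineq
  -- difference of bilinear parts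
  have hIuv : (∫ p in R2n n Ω, (u p.1 - u p.2) * (w p.1 - w p.2) * K (p.1 - p.2)) -
      (∫ p in R2n n Ω, (v p.1 - v p.2) * (w p.1 - w p.2) * K (p.1 - p.2)) =
      ∫ p in R2n n Ω, (a p.1 - a p.2) * (w p.1 - w p.2) * K (p.1 - p.2) := by
    rw [← integral_sub hIntFu hIntFv]
    refine integral_congr_ae (Eventually.of_forall fun p => ?_)
    simp only [ha, Pi.sub_apply]; ring
  -- difference of V parts
  have hPQ : (∫ x in Ω, V x * u x * w x) - (∫ x in Ω, V x * v x * w x) =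
      ∫ x in Ω, V x * w x ^ 2 := by
    rw [← integral_sub hIntVu hIntVv]
    refine integral_congr_ae (Eventually.of_forall fun x => ?_)
    have h1 := aux_mul_max (a x)
    calc V x * u x * w x - V x * v x * w x = V x * (a x * max (a x) 0) := by
          simp only [hwdef, ha]; ring
      _ = V x * w x ^ 2 := by rw [h1]
  have hVwpos : 0 ≤ ∫ x in Ω, V x * w x ^ 2 :=
    integral_nonneg fun x => mul_nonneg (hV0 x) (sq_nonneg _)
  -- H ≤ G pointwise a.e.
  have hHG : (∫ p in R2n n Ω, (w p.1 - w p.2) ^ 2 * K (p.1 - p.2)) ≤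
      ∫ p in R2n n Ω, (a p.1 - a p.2) * (w p.1 - w p.2) * K (p.1 - p.2) := by
    refine integral_mono_ae hIntH hIntG ?_
    filter_upwards [ae_restrict_of_ae hKpos] with p hp
    have h1 := aux_key (a p.1) (a p.2)
    have h2 : (w p.1 - w p.2) ^ 2 ≤ (a p.1 - a p.2) * (w p.1 - w p.2) := by
      simp only [hwdef]; exact h1
    nlinarith [mul_le_mul_of_nonneg_right h2 hp.le]
  -- value of ∫ H
  have hHval : (∫ p in R2n n Ω, (w p.1 - w p.2) ^ 2 * K (p.1 - p.2)) =
      (kerSqOn n Ω K w).toReal := by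
    rw [integral_eq_lintegral_of_nonneg_ae ?_ hIntH.1]
    · simp only [kerSqOn]
    · filter_upwards [ae_restrict_of_ae hKpos] with p hp
      exact mul_nonneg (sq_nonneg _) hp.le
  -- derive kerSqOn w = 0
  have htr : (kerSqOn n Ω K w).toReal ≤ 0 := by
    rw [← hHval]
    calc (∫ p in R2n n Ω, (w p.1 - w p.2) ^ 2 * K (p.1 - p.2))
        ≤ ∫ p in R2n n Ω, (a p.1 - a p.2) * (w p.1 - w p.2) * K (p.1 - p.2) := hHG
      _ = (∫ p in R2n n Ω, (u p.1 - u p.2) * (w p.1 - w p.2) * K (p.1 - p.2)) -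
          (∫ p in R2n n Ω, (v p.1 - v p.2) * (w p.1 - w p.2) * K (p.1 - p.2)) := hIuv.symm
      _ ≤ 2 * ((∫ x in Ω, V x * v x * w x) - ∫ x in Ω, V x * u x * w x) := by linarith
      _ = -2 * ∫ x in Ω, V x * w x ^ 2 := by linarith
      _ ≤ 0 := by linarith
  have hker0 : kerSqOn n Ω K w = 0 := by
    have h1 : (kerSqOn n Ω K w).toReal = 0 := le_antisymm htr ENNReal.toReal_nonneg
    rcases (ENNReal.toReal_eq_zero_iff _).mp h1 with h2 | h2
    · exact h2
    · exact absurd h2 hkerW.ne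
  -- a.e. equality of w on R2n
  have haeeq : ∀ᵐ p ∂(volume : Measure (En n × En n)).restrict (R2n n Ω), w p.1 = w p.2 := by
    have h0 : (fun p : En n × En n => ENNReal.ofReal ((w p.1 - w p.2) ^ 2 * K (p.1 - p.2)))
        =ᵐ[(volume : Measure (En n × En n)).restrict (R2n n Ω)] 0 := by
      refine (lintegral_eq_zero_iff (hfeM w hw_meas)).mp ?_
      simpa only [kerSqOn] using hker0
    filter_upwards [h0, ae_restrict_of_ae hKpos] with p h1 h2
    have h3 : (w p.1 - w p.2) ^ 2 * K (p.1 - p.2) ≤ 0 := by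
      have := ENNReal.ofReal_eq_zero.mp h1
      linarith
    have h4 : (w p.1 - w p.2) ^ 2 = 0 := by nlinarith [sq_nonneg (w p.1 - w p.2)]
    have h5 : w p.1 - w p.2 = 0 := by
      have h6 := sq_nonneg (w p.1 - w p.2)
      have h7 : (w p.1 - w p.2) ^ 2 = 0 := le_antisymm (by nlinarith) h6
      exact (pow_eq_zero_iff two_ne_zero).mp h7
    exact sub_eq_zero.mp h5
  -- restrict to Ω ×ˢ Ωᶜ and conclude via Fubini
  have hsub2 : (Ω ×ˢ (Ωᶜ) : Set (En n × En n)) ⊆ R2n n Ω := by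
    intro p hp
    simp only [R2n, Set.mem_compl_iff, Set.mem_prod, not_and]
    intro h1
    exact absurd hp.1 h1
  have haeeq2 := ae_restrict_of_ae_restrict_of_subset hsub2 haeeq
  have hprod2 : (volume : Measure (En n × En n)).restrict (Ω ×ˢ Ωᶜ) =
      ((volume : Measure (En n)).restrict Ω).prod ((volume : Measure (En n)).restrict Ωᶜ) := by
    rw [Measure.volume_eq_prod, Measure.prod_restrict]
  rw [hprod2] at haeeq2
  have hfub := Measure.ae_ae_of_ae_prod haeeq2
  -- Ωᶜ has positive measure
  have huniv : (volume : Measure (En n)) Set.univ = ⊤ :=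
    measure_univ_of_isAddLeftInvariant (volume : Measure (En n))
  have hcne : (volume : Measure (En n)) Ωᶜ ≠ 0 := by
    intro h0
    have hle : (volume : Measure (En n)) Set.univ ≤ volume Ω + volume Ωᶜ := by
      rw [← Set.union_compl_self Ω]; exact measure_union_le _ _
    rw [huniv, h0, add_zero] at hle
    exact absurd (lt_of_le_of_lt hle hΩb.measure_lt_top) (lt_irrefl _)
  haveI hnb : (ae ((volume : Measure (En n)).restrict Ωᶜ)).NeBot :=
    ae_neBot.mpr (fun h0 => hcne (Measure.restrict_eq_zero.mp h0))
  have hfinal : ∀ᵐ x ∂(volume : Measure (En n)).restrict Ω, w x = 0 := by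
    filter_upwards [hfub] with x hxy
    obtain ⟨y, hy1, hy2⟩ := (hxy.and hout).exists
    exact hy1.trans hy2
  have hin := (ae_restrict_iff' hΩm).mp hfinal
  filter_upwards [hin, hbd] with x h1 h2
  by_cases hx : x ∈ Ω
  · have h3 := h1 hx
    simp only [hwdef, ha] at h3
    have h4 : u x - v x ≤ 0 := by
      have h5 := le_max_left (u x - v x) 0
      linarith [h5.trans_eq h3]
    linarith
  · exact h2 hx
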